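/- arXiv:1702.01940 — 5 statements merged into one kernel-verified Lean document; each statement's English description precedes it below -/
import Mathlib

section
/- For quantum states ρ and σ on a finite-dimensional Hilbert space and any operator Λ with 0 ≤ Λ ≤ I, the absolute difference |√(Tr(Λρ)) − √(Tr(Λσ))| is at most the purified distance P(ρ,σ) = √(1 − F(ρ,σ)²), where F(ρ,σ) = ‖√ρ√σ‖₁ is the fidelity. -/
open Matrix
open scoped ComplexOrder Classical

variable {n : Type*} [Fintype n] [DecidableEq n]

/-- Square root of a positive semidefinite matrix (junk value `0` otherwise). -/
noncomputable def msqrt (A : Matrix n n ℂ) : Matrix n n ℂ :=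
  if h : A.PosSemidef then
    (h.1.eigenvectorUnitary : Matrix n n ℂ) *
      diagonal ((↑) ∘ Real.sqrt ∘ h.1.eigenvalues) * (star h.1.eigenvectorUnitary : Matrix n n ℂ)
  else 0

/-- Trace norm `‖A‖₁ = Tr √(AᴴA)`. -/
noncomputable def traceNorm (A : Matrix n n ℂ) : ℝ :=
  (msqrt (Aᴴ * A)).trace.re

/-- Fidelity `F(ρ,σ) = ‖√ρ√σ‖₁`. -/
noncomputable def fidelity (ρ σ : Matrix n n ℂ) : ℝ :=
  traceNorm (msqrt ρ * msqrt σ)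

/-- Purified distance `P(ρ,σ) = √(1 − F(ρ,σ)²)`. -/
noncomputable def purifiedDist (ρ σ : Matrix n n ℂ) : ℝ :=
  Real.sqrt (1 - (fidelity ρ σ) ^ 2)

section Aux

set_option linter.unusedSectionVars false
set_option maxHeartbeats 1000000

@[simp] lemma rcToC (x : ℝ) : (RCLike.ofReal x : ℂ) = (x : ℂ) := rfl

noncomputable def Matrix.PosSemidef.sqrt {A : Matrix n n ℂ} (h : A.PosSemidef) : Matrix n n ℂ :=
  (h.1.eigenvectorUnitary : Matrix n n ℂ) *
    diagonal ((↑) ∘ Real.sqrt ∘ h.1.eigenvalues) * (star h.1.eigenvectorUnitary : Matrix n n ℂ)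

lemma aux_conj (U D : Matrix n n ℂ) (hu : star U * U = 1) :
    U * D * star U * (U * D * star U) = U * (D * D) * star U := by
  calc _ = U * D * (star U * U) * D * star U := by simp only [Matrix.mul_assoc]
    _ = _ := by rw [hu, Matrix.mul_one]; simp only [Matrix.mul_assoc]

lemma Matrix.PosSemidef.posSemidef_sqrt {A : Matrix n n ℂ} (hA : A.PosSemidef) :
    hA.sqrt.PosSemidef := by
  unfold Matrix.PosSemidef.sqrt
  have hd : (diagonal ((↑) ∘ Real.sqrt ∘ hA.1.eigenvalues) : Matrix n n ℂ).PosSemidef :=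
    Matrix.PosSemidef.diagonal (fun i => by
      simp only [Pi.zero_apply, Function.comp_apply]
      exact Complex.zero_le_real.mpr (Real.sqrt_nonneg _))
  simpa [Matrix.star_eq_conjTranspose] using
    hd.mul_mul_conjTranspose_same (hA.1.eigenvectorUnitary : Matrix n n ℂ)

lemma Matrix.PosSemidef.sqrt_mul_self {A : Matrix n n ℂ} (hA : A.PosSemidef) :
    hA.sqrt * hA.sqrt = A := by
  unfold Matrix.PosSemidef.sqrt
  rw [aux_conj _ _ (Unitary.coe_star_mul_self _), diagonal_mul_diagonal]
  conv_rhs => rw [hA.1.spectral_theorem, Unitary.conjStarAlgAut_apply]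
  congr 2
  ext i j
  simp only [diagonal_apply]
  split_ifs
  · simp only [Function.comp_apply, rcToC]
    rw [← Complex.ofReal_mul, Real.mul_self_sqrt (hA.eigenvalues_nonneg _)]
  · rfl

lemma msqrt_eq {A : Matrix n n ℂ} (hA : A.PosSemidef) : msqrt A = hA.sqrt := dif_pos hA

lemma msqrt_psd {A : Matrix n n ℂ} (hA : A.PosSemidef) : (msqrt A).PosSemidef := by
  rw [msqrt_eq hA]; exact hA.posSemidef_sqrt

lemma msqrt_herm {A : Matrix n n ℂ} (hA : A.PosSemidef) : (msqrt A)ᴴ = msqrt A :=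
  (msqrt_psd hA).1

lemma msqrt_mul_self {A : Matrix n n ℂ} (hA : A.PosSemidef) : msqrt A * msqrt A = A := by
  rw [msqrt_eq hA]; exact hA.sqrt_mul_self

/-- matrix as euclidean vector -/
noncomputable def mvec (X : Matrix n n ℂ) : EuclideanSpace ℂ (n × n) :=
  (WithLp.equiv 2 _).symm (fun p => X p.1 p.2)

lemma inner_mvec (X Y : Matrix n n ℂ) :
    (inner ℂ (mvec X) (mvec Y) : ℂ) = ((Xᴴ * Y).trace) := by
  rw [Matrix.trace]
  simp only [PiLp.inner_apply, RCLike.inner_apply, mvec, WithLp.equiv_symm_apply, PiLp.toLp_apply,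
    Matrix.diag, Matrix.mul_apply, Matrix.conjTranspose_apply]
  rw [Finset.sum_comm, ← Finset.sum_product']
  exact Finset.sum_congr rfl (by simp [mul_comm])

lemma trace_conj_self_re (X : Matrix n n ℂ) :
    ((Xᴴ * X).trace).re = ‖mvec X‖ ^ 2 := by
  rw [← inner_mvec, ← RCLike.re_to_complex, ← inner_self_eq_norm_sq (𝕜 := ℂ)]

lemma trace_conj_self_nonneg (X : Matrix n n ℂ) : 0 ≤ ((Xᴴ * X).trace).re := by
  rw [trace_conj_self_re]; positivity

lemma cauchy_schwarz_trace (X Y : Matrix n n ℂ) :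
    ((Xᴴ * Y).trace).re ≤ Real.sqrt (((Xᴴ * X).trace).re) * Real.sqrt (((Yᴴ * Y).trace).re) := by
  have h1 : ((Xᴴ * Y).trace).re ≤ ‖(inner ℂ (mvec X) (mvec Y) : ℂ)‖ := by
    rw [← inner_mvec]
    simpa using Complex.re_le_norm (inner ℂ (mvec X) (mvec Y))
  refine h1.trans ?_
  have h2 := norm_inner_le_norm (𝕜 := ℂ) (mvec X) (mvec Y)
  refine h2.trans ?_
  rw [trace_conj_self_re, trace_conj_self_re, Real.sqrt_sq (norm_nonneg _),
    Real.sqrt_sq (norm_nonneg _)]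

lemma exists_polar (M : Matrix n n ℂ) :
    ∃ W : Matrix n n ℂ, Wᴴ * W = 1 ∧ traceNorm M = ((Wᴴ * M).trace).re ∧ 0 ≤ traceNorm M := by
  have hH : (Mᴴ * M).PosSemidef := posSemidef_conjTranspose_mul_self M
  set h : (Mᴴ * M).IsHermitian := hH.1 with hh
  set V : Matrix n n ℂ := (Matrix.IsHermitian.eigenvectorUnitary h : Matrix n n ℂ) with hVdef
  have hVmem := (Matrix.IsHermitian.eigenvectorUnitary h).2
  have hV1 : Vᴴ * V = 1 := by
    simpa [Matrix.star_eq_conjTranspose] using (Matrix.mem_unitaryGroup_iff').mp hVmem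
  have hV2 : V * Vᴴ = 1 := by
    simpa [Matrix.star_eq_conjTranspose] using (Matrix.mem_unitaryGroup_iff).mp hVmem
  set d : n → ℝ := h.eigenvalues with hd
  have hd0 : ∀ i, 0 ≤ d i := fun i => hH.eigenvalues_nonneg i
  set N : Matrix n n ℂ := M * V with hN
  have hNN : Nᴴ * N = diagonal (RCLike.ofReal ∘ d) := by
    have hspec := h.spectral_theorem
    rw [Unitary.conjStarAlgAut_apply, Matrix.star_eq_conjTranspose] at hspec
    calc Nᴴ * N = Vᴴ * (Mᴴ * M) * V := by
          rw [hN, conjTranspose_mul]; noncomm_ring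
      _ = (Vᴴ * V) * diagonal (RCLike.ofReal ∘ d) * (Vᴴ * V) := by
          rw [hspec]; noncomm_ring
      _ = diagonal (RCLike.ofReal ∘ d) := by rw [hV1]; simp
  set s : Set n := {i | d i ≠ 0} with hs
  set v : n → EuclideanSpace ℂ n :=
    fun i => (WithLp.equiv 2 _).symm (fun j => (Real.sqrt (d i) : ℂ)⁻¹ * N j i) with hv
  have hsum : ∀ i j : n, ∑ k, (starRingEnd ℂ) (N k i) * N k j
      = diagonal (RCLike.ofReal ∘ d) i j := by
    intro i j
    rw [← hNN, Matrix.mul_apply]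
    simp [Matrix.conjTranspose_apply]
  have hsqm : ∀ i, (Real.sqrt (d i) : ℂ) * (Real.sqrt (d i) : ℂ) = (d i : ℂ) := by
    intro i
    rw [← Complex.ofReal_mul, Real.mul_self_sqrt (hd0 i)]
  have hortho : Orthonormal ℂ (s.restrict v) := by
    rw [orthonormal_iff_ite]
    rintro ⟨i, hi⟩ ⟨j, hj⟩
    simp only [Set.restrict_apply, PiLp.inner_apply, RCLike.inner_apply, hv,
      WithLp.equiv_symm_apply, PiLp.toLp_apply]
    change ∑ k, ((Real.sqrt (d j) : ℂ)⁻¹ * N k j) *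
        (starRingEnd ℂ) ((Real.sqrt (d i) : ℂ)⁻¹ * N k i) = _
    have key : ∑ k, ((Real.sqrt (d j) : ℂ)⁻¹ * N k j) *
        (starRingEnd ℂ) ((Real.sqrt (d i) : ℂ)⁻¹ * N k i)
        = (Real.sqrt (d i) : ℂ)⁻¹ * (Real.sqrt (d j) : ℂ)⁻¹ *
          ∑ k, (starRingEnd ℂ) (N k i) * N k j := by
      rw [Finset.mul_sum]
      refine Finset.sum_congr rfl fun k _ => ?_
      simp only [_root_.map_mul, map_inv₀, Complex.conj_ofReal]
      ring
    rw [key, hsum i j]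
    rcases eq_or_ne i j with rfl | hij
    · rw [if_pos rfl, diagonal_apply_eq]
      have hdi : (d i : ℂ) ≠ 0 := by exact_mod_cast hi
      have hsne : (Real.sqrt (d i) : ℂ) ≠ 0 := fun hc => hdi (by rw [← hsqm i, hc, mul_zero])
      rw [Function.comp_apply, rcToC, ← hsqm i]
      field_simp
    · have hne : ¬ ((⟨i, hi⟩ : s) = ⟨j, hj⟩) := by simpa [Subtype.ext_iff] using hij
      rw [diagonal_apply_ne _ hij, if_neg hne, mul_zero]
  obtain ⟨b, hb⟩ := hortho.exists_orthonormalBasis_extension_of_card_eq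
    (by simp [finrank_euclideanSpace])
  set U : Matrix n n ℂ := Matrix.of (fun j i => (b i : EuclideanSpace ℂ n) j) with hU
  have hU1 : Uᴴ * U = 1 := by
    ext i j
    rw [Matrix.mul_apply, Matrix.one_apply]
    have hbo := (orthonormal_iff_ite.mp b.orthonormal) i j
    rw [PiLp.inner_apply] at hbo
    simpa [hU, Matrix.conjTranspose_apply, RCLike.inner_apply, mul_comm] using hbo
  have hU2 : U * Uᴴ = 1 := mul_eq_one_comm.mp hU1
  have hcol : ∀ j i, N j i = U j i * (Real.sqrt (d i) : ℂ) := by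
    intro j i
    rcases eq_or_ne (d i) 0 with hdi | hdi
    · have hzero : N j i = 0 := by
        have h0 : ∑ k, Complex.normSq (N k i) = 0 := by
          have h1 := hsum i i
          rw [diagonal_apply_eq] at h1
          have h2 : ∀ k : n, (starRingEnd ℂ) (N k i) * N k i
              = (Complex.normSq (N k i) : ℂ) := fun k => by rw [mul_comm, Complex.mul_conj]
          rw [Finset.sum_congr rfl (fun k _ => h2 k), Function.comp_apply, rcToC, hdi,
            Complex.ofReal_zero] at h1
          exact_mod_cast h1
        have h2 := (Finset.sum_eq_zero_iff_of_nonneg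
          (fun k _ => Complex.normSq_nonneg (N k i))).mp h0 j (Finset.mem_univ j)
        exact Complex.normSq_eq_zero.mp h2
      rw [hzero, hdi]
      simp
    · have hmem : i ∈ s := hdi
      have hbv : b i = v i := hb i hmem
      have hsne : (Real.sqrt (d i) : ℂ) ≠ 0 := fun hc => by
        have hne : (d i : ℂ) ≠ 0 := by exact_mod_cast hdi
        exact hne (by rw [← hsqm i, hc, mul_zero])
      rw [hU]
      simp only [Matrix.of_apply, hbv, hv, WithLp.equiv_symm_apply, PiLp.toLp_apply]
      field_simp
  have hND : N = U * diagonal (RCLike.ofReal ∘ Real.sqrt ∘ d) := by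
    ext j i
    rw [Matrix.mul_diagonal]
    exact hcol j i
  have hM : M = U * diagonal (RCLike.ofReal ∘ Real.sqrt ∘ d) * Vᴴ := by
    calc M = M * (V * Vᴴ) := by rw [hV2, mul_one]
      _ = N * Vᴴ := by rw [hN]; noncomm_ring
      _ = _ := by rw [hND]
  refine ⟨U * Vᴴ, ?_, ?_, ?_⟩
  · calc (U * Vᴴ)ᴴ * (U * Vᴴ) = V * (Uᴴ * U) * Vᴴ := by
          simp only [conjTranspose_mul, conjTranspose_conjTranspose]; noncomm_ring
      _ = 1 := by rw [hU1, mul_one, hV2]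
  · have hWM : (U * Vᴴ)ᴴ * M = V * diagonal (RCLike.ofReal ∘ Real.sqrt ∘ d) * Vᴴ := by
      conv_lhs => rw [hM]
      calc (U * Vᴴ)ᴴ * (U * diagonal (RCLike.ofReal ∘ Real.sqrt ∘ d) * Vᴴ)
          = V * (Uᴴ * U) * (diagonal (RCLike.ofReal ∘ Real.sqrt ∘ d) * Vᴴ) := by
            simp only [conjTranspose_mul, conjTranspose_conjTranspose]; noncomm_ring
        _ = _ := by rw [hU1, mul_one]; noncomm_ring
    have hsqrt : msqrt (Mᴴ * M) = V * diagonal (RCLike.ofReal ∘ Real.sqrt ∘ d) * Vᴴ := by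
      rw [msqrt_eq hH]
      rfl
    rw [traceNorm, hsqrt, hWM]
  · rw [traceNorm, msqrt_eq hH]
    have htr : (hH.sqrt).trace = ∑ i, (Real.sqrt (d i) : ℂ) := by
      show (V * diagonal (RCLike.ofReal ∘ Real.sqrt ∘ d) * Vᴴ).trace = _
      rw [Matrix.trace_mul_cycle, hV1, Matrix.one_mul, Matrix.trace_diagonal]
      rfl
    rw [htr]
    simp only [Complex.re_sum, Complex.ofReal_re]
    positivity

lemma trace_conj_unit {W Z : Matrix n n ℂ} (hW : W * Wᴴ = 1) :
    (Wᴴ * Z * W).trace = Z.trace := by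
  rw [Matrix.trace_mul_cycle, hW, Matrix.one_mul]

lemma trace_form (C A : Matrix n n ℂ) (hCH : Cᴴ = C) (hAH : Aᴴ = A) :
    ((C * A)ᴴ * (C * A)).trace = ((C * C) * (A * A)).trace := by
  calc ((C * A)ᴴ * (C * A)).trace = ((A * C) * (C * A)).trace := by
        rw [conjTranspose_mul, hCH, hAH]
    _ = ((C * A) * (A * C)).trace := Matrix.trace_mul_comm _ _
    _ = (C * (A * A) * C).trace := congrArg Matrix.trace (by noncomm_ring)
    _ = ((C * C) * (A * A)).trace := by rw [Matrix.trace_mul_cycle]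

lemma trace_form_W (C A W : Matrix n n ℂ) (hCH : Cᴴ = C) (hAH : Aᴴ = A)
    (hW2 : W * Wᴴ = 1) :
    ((C * A * W)ᴴ * (C * A * W)).trace = ((C * C) * (A * A)).trace := by
  have h' : (C * A * W)ᴴ * (C * A * W) = Wᴴ * ((C * A)ᴴ * (C * A)) * W := by
    simp only [conjTranspose_mul, Matrix.mul_assoc]
  rw [h', trace_conj_unit hW2, trace_form C A hCH hAH]

lemma key_ineq {a b c d : ℝ} (ha : 0 ≤ a) (hb : 0 ≤ b) (hc : 0 ≤ c) (hd : 0 ≤ d)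
    (h1 : a^2 + c^2 = 1) (h2 : b^2 + d^2 = 1) (hba : b ≤ a) : a - b ≤ a*d - b*c := by
  have hcd : c ≤ d := by nlinarith
  have hc1 : c ≤ 1 := by nlinarith
  have hd1 : 0 < 1 + d := by linarith
  nlinarith [mul_nonneg (mul_nonneg hb (by linarith : (0:ℝ) ≤ 1 - c))
      (by linarith : (0:ℝ) ≤ d - c),
    mul_nonneg (mul_nonneg ha hb) (by linarith : (0:ℝ) ≤ a - b)]

lemma real_final (p q F : ℝ) (hp0 : 0 ≤ p) (hp1 : p ≤ 1) (hq0 : 0 ≤ q) (hq1 : q ≤ 1)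
    (hF0 : 0 ≤ F)
    (hF : F ≤ Real.sqrt p * Real.sqrt q + Real.sqrt (1-p) * Real.sqrt (1-q)) :
    |Real.sqrt p - Real.sqrt q| ≤ Real.sqrt (1 - F^2) := by
  set a := Real.sqrt p with hadef
  set b := Real.sqrt q with hbdef
  set c := Real.sqrt (1-p) with hcdef
  set d := Real.sqrt (1-q) with hddef
  have ha0 : 0 ≤ a := Real.sqrt_nonneg _
  have hb0 : 0 ≤ b := Real.sqrt_nonneg _
  have hc0 : 0 ≤ c := Real.sqrt_nonneg _
  have hd0 : 0 ≤ d := Real.sqrt_nonneg _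
  have h1 : a^2 + c^2 = 1 := by
    rw [hadef, hcdef, Real.sq_sqrt hp0, Real.sq_sqrt (by linarith)]; ring
  have h2 : b^2 + d^2 = 1 := by
    rw [hbdef, hddef, Real.sq_sqrt hq0, Real.sq_sqrt (by linarith)]; ring
  have hsq : (a - b)^2 ≤ 1 - F^2 := by
    have hFsq : F^2 ≤ (a*b + c*d)^2 := pow_le_pow_left₀ hF0 hF 2
    have hlag : 1 - (a*b + c*d)^2 = (a*d - b*c)^2 := by nlinarith [h1, h2]
    have hkey : (a - b)^2 ≤ (a*d - b*c)^2 := by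
      rcases le_total b a with hba | hab
      · have hk := key_ineq ha0 hb0 hc0 hd0 h1 h2 hba
        have h0 : 0 ≤ a - b := by linarith
        nlinarith
      · have hk := key_ineq hb0 ha0 hd0 hc0 h2 h1 hab
        have h0 : 0 ≤ b - a := by linarith
        nlinarith
    linarith
  calc |a - b| = Real.sqrt ((a-b)^2) := (Real.sqrt_sq_eq_abs _).symm
    _ ≤ Real.sqrt (1 - F^2) := Real.sqrt_le_sqrt hsq

end Aux

/-- For quantum states `ρ, σ` and an operator `0 ≤ Λ ≤ I`,
`|√(Tr(Λρ)) − √(Tr(Λσ))| ≤ P(ρ,σ)`. -/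
theorem measurement_stability (ρ σ Λ : Matrix n n ℂ)
    (hρ : ρ.PosSemidef) (hρ1 : ρ.trace = 1)
    (hσ : σ.PosSemidef) (hσ1 : σ.trace = 1)
    (hΛ : Λ.PosSemidef) (hΛI : (1 - Λ).PosSemidef) :
    |Real.sqrt ((Λ * ρ).trace.re) - Real.sqrt ((Λ * σ).trace.re)| ≤ purifiedDist ρ σ := by
  set A := msqrt ρ with hAdef
  set B := msqrt σ with hBdef
  set C := msqrt Λ with hCdef
  set C' := msqrt (1 - Λ) with hC'def
  have hAH : Aᴴ = A := msqrt_herm hρ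
  have hBH : Bᴴ = B := msqrt_herm hσ
  have hCH : Cᴴ = C := msqrt_herm hΛ
  have hC'H : C'ᴴ = C' := msqrt_herm hΛI
  have hAA : A * A = ρ := msqrt_mul_self hρ
  have hBB : B * B = σ := msqrt_mul_self hσ
  have hCC : C * C = Λ := msqrt_mul_self hΛ
  have hC'C' : C' * C' = 1 - Λ := msqrt_mul_self hΛI
  obtain ⟨W, hW1, hWtr, hWnn⟩ := exists_polar (A * B)
  have hW2 : W * Wᴴ = 1 := mul_eq_one_comm.mp hW1
  -- trace of (1-Λ) against states
  have hcompl : ∀ τ : Matrix n n ℂ, τ.trace = 1 →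
      ((1 - Λ) * τ).trace = 1 - (Λ * τ).trace := by
    intro τ hτ
    rw [Matrix.sub_mul, Matrix.one_mul, Matrix.trace_sub, hτ]
  -- p and q identities
  have hpA : ((C * A)ᴴ * (C * A)).trace = (Λ * ρ).trace := by
    rw [trace_form C A hCH hAH, hCC, hAA]
  have hqB : ((C * B)ᴴ * (C * B)).trace = (Λ * σ).trace := by
    rw [trace_form C B hCH hBH, hCC, hBB]
  have hpA' : ((C' * A)ᴴ * (C' * A)).trace = ((1 - Λ) * ρ).trace := by
    rw [trace_form C' A hC'H hAH, hC'C', hAA]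
  have hqB' : ((C' * B)ᴴ * (C' * B)).trace = ((1 - Λ) * σ).trace := by
    rw [trace_form C' B hC'H hBH, hC'C', hBB]
  have hpAW : ((C * A * W)ᴴ * (C * A * W)).trace = (Λ * ρ).trace := by
    rw [trace_form_W C A W hCH hAH hW2, hCC, hAA]
  have hpAW' : ((C' * A * W)ᴴ * (C' * A * W)).trace = ((1 - Λ) * ρ).trace := by
    rw [trace_form_W C' A W hC'H hAH hW2, hC'C', hAA]
  -- bounds on p, q
  have hp0 : 0 ≤ ((Λ * ρ).trace).re := by
    rw [← hpA]; exact trace_conj_self_nonneg _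
  have hq0 : 0 ≤ ((Λ * σ).trace).re := by
    rw [← hqB]; exact trace_conj_self_nonneg _
  have hp1 : ((Λ * ρ).trace).re ≤ 1 := by
    have h0 : 0 ≤ (((1 - Λ) * ρ).trace).re := by
      rw [← hpA']; exact trace_conj_self_nonneg _
    rw [hcompl ρ hρ1, Complex.sub_re, Complex.one_re] at h0
    linarith
  have hq1 : ((Λ * σ).trace).re ≤ 1 := by
    have h0 : 0 ≤ (((1 - Λ) * σ).trace).re := by
      rw [← hqB']; exact trace_conj_self_nonneg _
    rw [hcompl σ hσ1, Complex.sub_re, Complex.one_re] at h0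
    linarith
  have h1p : (((1 - Λ) * ρ).trace).re = 1 - ((Λ * ρ).trace).re := by
    rw [hcompl ρ hρ1, Complex.sub_re, Complex.one_re]
  have h1q : (((1 - Λ) * σ).trace).re = 1 - ((Λ * σ).trace).re := by
    rw [hcompl σ hσ1, Complex.sub_re, Complex.one_re]
  -- splitting
  have hsplit : A * B = A * C * (C * B) + A * C' * (C' * B) := by
    have hone : C * C + C' * C' = 1 := by rw [hCC, hC'C']; abel
    calc A * B = A * ((C * C + C' * C') * B) := by rw [hone, Matrix.one_mul]
      _ = _ := by noncomm_ring
  -- term bounds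
  have hterm1 : ((Wᴴ * (A * C * (C * B))).trace).re ≤
      Real.sqrt (((Λ * ρ).trace).re) * Real.sqrt (((Λ * σ).trace).re) := by
    have hform : Wᴴ * (A * C * (C * B)) = (C * A * W)ᴴ * (C * B) := by
      simp only [conjTranspose_mul, hAH, hCH, Matrix.mul_assoc]
    rw [hform]
    have hcs := cauchy_schwarz_trace (C * A * W) (C * B)
    rwa [hpAW, hqB] at hcs
  have hterm2 : ((Wᴴ * (A * C' * (C' * B))).trace).re ≤
      Real.sqrt (1 - ((Λ * ρ).trace).re) * Real.sqrt (1 - ((Λ * σ).trace).re) := by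
    have hform : Wᴴ * (A * C' * (C' * B)) = (C' * A * W)ᴴ * (C' * B) := by
      simp only [conjTranspose_mul, hAH, hC'H, Matrix.mul_assoc]
    rw [hform]
    have hcs := cauchy_schwarz_trace (C' * A * W) (C' * B)
    rwa [hpAW', hqB', h1p, h1q] at hcs
  -- fidelity bound
  have hF0 : 0 ≤ fidelity ρ σ := hWnn
  have hFb : fidelity ρ σ ≤
      Real.sqrt (((Λ * ρ).trace).re) * Real.sqrt (((Λ * σ).trace).re)
      + Real.sqrt (1 - ((Λ * ρ).trace).re) * Real.sqrt (1 - ((Λ * σ).trace).re) := by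
    have : fidelity ρ σ = ((Wᴴ * (A * B)).trace).re := hWtr
    rw [this, hsplit, Matrix.mul_add, Matrix.trace_add, Complex.add_re]
    exact add_le_add hterm1 hterm2
  rw [purifiedDist]
  exact real_final _ _ _ hp0 hp1 hq0 hq1 hF0 hFb
end

section
/- Hayashi–Nagaoka operator inequality: if S, T are positive semidefinite operators on a finite-dimensional Hilbert space with 0 ≤ S ≤ I, then I − (S+T)^{−1/2} S (S+T)^{−1/2} ≤ 2(I − S) + 4T, where inverses are taken on the support of S+T (generalized inverse). -/
open Matrix Kronecker
open scoped ComplexOrder Classical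

variable {n : Type*} [Fintype n] [DecidableEq n]


/-- If `B` commutes with `A * A` for psd `A`, then `B` commutes with `A`. -/
lemma commute_of_sq_commute (A B : Matrix n n ℂ) (hA : A.PosSemidef)
    (h : B * (A * A) = (A * A) * B) : B * A = A * B := by
  have hAh := hA.1
  set U : Matrix n n ℂ := (hAh.eigenvectorUnitary : Matrix n n ℂ) with hU
  set d : n → ℂ := fun i => ((hAh.eigenvalues i : ℝ) : ℂ) with hd
  have hspec : A = U * diagonal d * star U := hAh.spectral_theorem
  have hU1 : star U * U = 1 := by
    exact Matrix.mem_unitaryGroup_iff'.mp hAh.eigenvectorUnitary.2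
  have hU2 : U * star U = 1 := by
    exact Matrix.mem_unitaryGroup_iff.mp hAh.eigenvectorUnitary.2
  set C : Matrix n n ℂ := star U * B * U with hC
  have hAA : A * A = U * (diagonal d * diagonal d) * star U := by
    rw [hspec]
    calc U * diagonal d * star U * (U * diagonal d * star U)
        = U * diagonal d * (star U * U) * diagonal d * star U := by
          simp only [mul_assoc]
      _ = U * (diagonal d * diagonal d) * star U := by rw [hU1]; simp only [mul_one, mul_assoc]
  have hCD : C * (diagonal d * diagonal d) = (diagonal d * diagonal d) * C := by
    have := congrArg (fun Z => star U * Z * U) h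
    rw [hAA] at this
    calc C * (diagonal d * diagonal d)
        = star U * B * (U * (diagonal d * diagonal d) * star U) * U := by
          simp only [hC, mul_assoc, hU1, hU2, mul_one]
      _ = star U * (U * (diagonal d * diagonal d) * star U) * B * U := by
          rw [mul_assoc (star U) B, this, ← mul_assoc, ← mul_assoc]
      _ = (diagonal d * diagonal d) * C := by
          simp only [hC, mul_assoc, mul_one]
          rw [← mul_assoc (star U) U, hU1, one_mul]
  have hentry : ∀ i j, C i j * d j = d i * C i j := by
    intro i j
    by_cases hij : hAh.eigenvalues i = hAh.eigenvalues j
    · have : d i = d j := by simp [hd, hij]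
      rw [this, mul_comm]
    · have h2 := congrFun (congrFun hCD i) j
      simp only [diagonal_mul_diagonal, mul_diagonal, diagonal_mul, Pi.mul_apply] at h2
      have hC0 : C i j = 0 := by
        have hne : d j * d j ≠ d i * d i := by
          simp only [hd, ← Complex.ofReal_mul]
          intro hcon
          apply hij
          have := Complex.ofReal_injective hcon
          nlinarith [hA.eigenvalues_nonneg i, hA.eigenvalues_nonneg j,
            sq_nonneg (hAh.eigenvalues i - hAh.eigenvalues j),
            sq_nonneg (hAh.eigenvalues i + hAh.eigenvalues j)]
        have hz : (d j * d j - d i * d i) * C i j = 0 := by linear_combination h2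
        rcases mul_eq_zero.mp hz with h | h
        · exact absurd (sub_eq_zero.mp h) hne
        · exact h
      simp [hC0]
  have hCd : C * diagonal d = diagonal d * C := by
    ext i j
    simp only [mul_diagonal, diagonal_mul]
    exact hentry i j
  have hB : B = U * C * star U := by
    simp only [hC, mul_assoc, hU2, mul_one]
    rw [← mul_assoc U (star U), hU2, one_mul]
  rw [hB, hspec]
  calc U * C * star U * (U * diagonal d * star U)
      = U * (C * diagonal d) * star U := by
        simp only [mul_assoc]; rw [← mul_assoc (star U) U, hU1, one_mul]
    _ = U * (diagonal d * C) * star U := by rw [hCd]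
    _ = U * diagonal d * star U * (U * C * star U) := by
        simp only [mul_assoc]; rw [← mul_assoc (star U) U, hU1, one_mul]



/-- Monotonicity of the square root: if `A, B` are psd and `B*B - A*A` is psd,
then `B - A` is psd. -/
lemma sub_posSemidef_of_sq_sub_sq (A B : Matrix n n ℂ) (hA : A.PosSemidef) (hB : B.PosSemidef)
    (h : (B * B - A * A).PosSemidef) : (B - A).PosSemidef := by
  have hD : (B - A).IsHermitian := hB.1.sub hA.1
  apply hD.posSemidef_iff_eigenvalues_nonneg.mpr
  intro i
  by_contra hneg
  push_neg at hneg
  set μ : ℝ := hD.eigenvalues i with hμ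
  set v : n → ℂ := ⇑(hD.eigenvectorBasis i) with hv
  have hv0 : v ≠ 0 := by
    intro h0
    have h1 : ‖hD.eigenvectorBasis i‖ = 1 := hD.eigenvectorBasis.orthonormal.1 i
    have : (hD.eigenvectorBasis i : EuclideanSpace ℂ n) = 0 := by
      ext j; exact congrFun h0 j
    rw [this] at h1; simp at h1
  have heig : (B - A) *ᵥ v = (μ : ℂ) • v := by
    have h0 := hD.mulVec_eigenvectorBasis i
    funext j
    have h1 := congrFun h0 j
    simpa [Complex.real_smul] using h1
  set w : n → ℂ := B *ᵥ v with hw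
  have ha : A *ᵥ v = w - (μ : ℂ) • v := by
    have : (B - A) *ᵥ v = w - A *ᵥ v := by rw [sub_mulVec]
    rw [this] at heig
    linear_combination (norm := module) - heig
  -- β := star v ⬝ᵥ w  is nonneg real
  have hβ : 0 ≤ star v ⬝ᵥ (B *ᵥ v) := hB.dotProduct_mulVec_nonneg v
  set β : ℂ := star v ⬝ᵥ w with hβdef
  have hβre : 0 ≤ β.re := by
    have := (Complex.le_def.mp hβ).1; simpa using this
  have hβim : β.im = 0 := by
    have := (Complex.le_def.mp hβ).2; simpa [hβdef] using this.symm
  -- γ := star v ⬝ᵥ v is positive real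
  set γ : ℂ := star v ⬝ᵥ v with hγdef
  have hγ : 0 < γ := dotProduct_star_self_pos_iff.mpr hv0
  have hγre : 0 < γ.re := by
    have := (Complex.lt_def.mp hγ).1; simpa using this
  -- star w ⬝ᵥ v = conj β
  have hwvc : star w ⬝ᵥ v = (starRingEnd ℂ) β := by
    have : star β = star w ⬝ᵥ v := by
      rw [hβdef, star_dotProduct]
      simp
    rw [← this]; rfl
  -- quadratic form computations
  have hAq : star v ⬝ᵥ ((A * A) *ᵥ v) = star (A *ᵥ v) ⬝ᵥ (A *ᵥ v) := by
    rw [← mulVec_mulVec, star_mulVec, hA.1.eq, ← dotProduct_mulVec]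
  have hBq : star v ⬝ᵥ ((B * B) *ᵥ v) = star w ⬝ᵥ w := by
    rw [← mulVec_mulVec, star_mulVec, hB.1.eq, ← dotProduct_mulVec, hw]
  have hineq := h.dotProduct_mulVec_nonneg v
  rw [sub_mulVec, dotProduct_sub, hAq, hBq, ha] at hineq
  -- expand
  have hexp : star (w - (μ : ℂ) • v) ⬝ᵥ (w - (μ : ℂ) • v)
      = star w ⬝ᵥ w - (μ : ℂ) * (star w ⬝ᵥ v) - (μ : ℂ) * β + (μ : ℂ) * (μ : ℂ) * γ := by
    simp only [star_sub, star_smul, sub_dotProduct, dotProduct_sub, smul_dotProduct,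
      dotProduct_smul, smul_eq_mul, hβdef, hγdef, Complex.star_def, Complex.conj_ofReal]
    ring
  rw [hexp, hwvc] at hineq
  have hconjβ : (starRingEnd ℂ) β = β := Complex.conj_eq_iff_im.mpr hβim
  rw [hconjβ] at hineq
  have hsimp : star w ⬝ᵥ w - (star w ⬝ᵥ w - (μ:ℂ) * β - (μ:ℂ) * β + (μ:ℂ) * (μ:ℂ) * γ)
      = 2 * (μ:ℂ) * β - (μ:ℂ) * (μ:ℂ) * γ := by ring
  rw [hsimp] at hineq
  have hre := (Complex.le_def.mp hineq).1
  simp only [Complex.zero_re, Complex.sub_re, Complex.mul_re, Complex.ofReal_re,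
    Complex.ofReal_im, Complex.re_ofNat, Complex.im_ofNat, Complex.mul_im, hβim,
    mul_zero, zero_mul, sub_zero, add_zero, zero_add] at hre
  nlinarith [hγre, hβre, mul_nonneg (neg_nonneg.mpr hneg.le) hβre,
    mul_pos (mul_pos_of_neg_of_neg hneg hneg) hγre]

open scoped MatrixOrder in
lemma exists_psd_sqrt (A : Matrix n n ℂ) (hA : A.PosSemidef) :
    ∃ N : Matrix n n ℂ, N.PosSemidef ∧ N * N = A :=
  ⟨CFC.sqrt A, (CFC.sqrt_nonneg A).posSemidef, CFC.sqrt_mul_sqrt_self A hA.nonneg⟩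

/-- Hayashi–Nagaoka operator inequality: if `0 ≤ S ≤ I`, `T ≥ 0`, and `X` is the square root
of the Moore–Penrose pseudoinverse of `S + T` (characterized by the conditions on `X * X`),
then `I − X S X ≤ 2(I − S) + 4T`. -/
theorem hayashi_nagaoka (S T X : Matrix n n ℂ)
    (hS : S.PosSemidef) (hSI : (1 - S).PosSemidef) (hT : T.PosSemidef)
    (hX : X.PosSemidef)
    (hcomm : (S + T) * (X * X) = (X * X) * (S + T))
    (hpinv1 : (S + T) * (X * X) * (S + T) = S + T)
    (hpinv2 : (X * X) * (S + T) * (X * X) = X * X) :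
    ((2 : ℂ) • (1 - S) + (4 : ℂ) • T - (1 - X * S * X)).PosSemidef := by
  set M : Matrix n n ℂ := S + T with hMdef
  have hM : M.PosSemidef := hS.add hT
  have hMX : M * X = X * M := commute_of_sq_commute X M hX hcomm
  have hXMX : X * M * X = X * X * M := by
    rw [mul_assoc, hMX, ← mul_assoc]
  -- N = sqrt M
  obtain ⟨N, hN, hNN⟩ := exists_psd_sqrt M hM
  have hXN : X * N = N * X :=
    commute_of_sq_commute N X hN (by rw [hNN]; exact hMX.symm)
  -- Y = X * M is psd with Y * Y = M
  have hYpsd : (X * M).PosSemidef := by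
    have h1 : X * M = Nᴴ * X * N := by
      rw [hN.1.eq, ← hNN, ← mul_assoc, hXN]
    rw [h1]
    exact hX.conjTranspose_mul_mul_same N
  have hYY : (X * M) * (X * M) = M := by
    calc X * M * (X * M) = X * M * X * M := by rw [← mul_assoc]
      _ = X * X * M * M := by rw [hXMX]
      _ = M * (X * X) * M := by rw [hcomm]
      _ = M := hpinv1
  -- S - S * S is psd
  obtain ⟨R, hRh, hR⟩ := exists_psd_sqrt S hS
  have hSsq : (S - S * S).PosSemidef := by
    have h1 : S - S * S = Rᴴ * (1 - S) * R := by
      rw [hRh.1.eq, ← hR]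
      noncomm_ring
    rw [h1]
    exact hSI.conjTranspose_mul_mul_same _
  have hMS2 : ((X * M) * (X * M) - S * S).PosSemidef := by
    have h1 : (X * M) * (X * M) - S * S = T + (S - S * S) := by
      rw [hYY, hMdef]; abel
    rw [h1]
    exact hT.add hSsq
  have hYS : (X * M - S).PosSemidef := sub_posSemidef_of_sq_sub_sq S (X * M) hS hYpsd hMS2
  -- P := X * X * M is an orthogonal projection
  have hPP : (X * X * M) * (X * X * M) = X * X * M := by
    calc (X * X * M) * (X * X * M) = (X * X * M * (X * X)) * M := by
          simp only [mul_assoc]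
      _ = (X * X) * M := by rw [hpinv2]
  have hPherm : ((1 : Matrix n n ℂ) - X * X * M)ᴴ = 1 - X * X * M := by
    simp only [conjTranspose_sub, conjTranspose_one, conjTranspose_mul, hM.1.eq, hX.1.eq]
    rw [hcomm, mul_assoc]
  have h1P : ((1 : Matrix n n ℂ) - X * X * M).PosSemidef := by
    have h2 : ((1 : Matrix n n ℂ) - X * X * M) = (1 - X * X * M) * (1 - X * X * M) := by
      have h3 : ((1 : Matrix n n ℂ) - X * X * M) * (1 - X * X * M)
          = 1 - (X * X * M) - (X * X * M) + (X * X * M) * (X * X * M) := by noncomm_ring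
      rw [h3, hPP]; abel
    have h4 := posSemidef_conjTranspose_mul_self ((1 : Matrix n n ℂ) - X * X * M)
    rwa [hPherm, ← h2] at h4
  -- conjugation terms
  have hE1 : ((X - 2) * T * (X - 2) : Matrix n n ℂ).PosSemidef := by
    have h1 : ((X - 2 : Matrix n n ℂ))ᴴ = X - 2 := by
      rw [conjTranspose_sub, hX.1.eq]
      congr 1
      simp
    have h5 := hT.conjTranspose_mul_mul_same (X - 2)
    rwa [h1] at h5
  have hE2 : ((X - 1) * S * (X - 1) : Matrix n n ℂ).PosSemidef := by
    have h1 : ((X - 1 : Matrix n n ℂ))ᴴ = X - 1 := by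
      rw [conjTranspose_sub, hX.1.eq, conjTranspose_one]
    have h5 := hS.conjTranspose_mul_mul_same (X - 1)
    rwa [h1] at h5
  -- the big algebraic identity
  have key : (2 : ℂ) • (1 - S) + (4 : ℂ) • T - (1 - X * S * X)
      = (1 - X * X * M) + ((X * M - S) + (X * M - S) + (X * M - S) + (X * M - S))
        + (X - 2) * T * (X - 2) + ((X - 1) * S * (X - 1) + (X - 1) * S * (X - 1))
        + ((M * X - X * M) + (M * X - X * M) + (X * X * M - X * M * X)) := by
    rw [hMdef]
    rw [two_smul, show (4 : ℂ) = 2 + 2 by norm_num, add_smul, two_smul]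
    noncomm_ring
  rw [key, hMX, hXMX]
  simp only [sub_self, add_zero]
  exact (((h1P.add ((((hYS.add hYS).add hYS).add hYS))).add hE1).add (hE2.add hE2))
end

section
/- Combinatorial bound in the i.i.d. position-based decoding: for positive integers n, w with w > 2n and any real F ≥ 0, (1/C(w,n)) · Σ_{t=0}^{n} C(n,t)·C(w−n, n−t)·2^{F·t} ≤ (1 + 2^F·n/(w−2n))^n, where C(a,b) denotes the binomial coefficient. -/
open Matrix Kronecker
open scoped ComplexOrder Classical

variable {n : Type*} [Fintype n] [DecidableEq n]

lemma aux_choose_bound (n w : ℕ) (h : 2 * n < w) :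
    ∀ t, t ≤ n → (w - n).choose (n - t) * (w - 2*n)^t ≤ (w - n).choose n * n^t := by
  intro t
  induction t with
  | zero => simp
  | succ t ih =>
    intro ht
    have ht' : t ≤ n := Nat.le_of_succ_le ht
    have key : (w - n).choose (n - (t+1)) * (w - 2*n) ≤ (w - n).choose (n - t) * n := by
      have h1 : (w - n).choose (n - t) * (n - t) =
          (w - n).choose (n - t - 1) * ((w - n) - (n - t - 1)) := by
        have h2 : n - t - 1 + 1 = n - t := by omega
        have := Nat.choose_succ_right_eq (w - n) (n - t - 1)
        rw [h2] at this
        exact this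
      have h3 : n - (t+1) = n - t - 1 := by omega
      rw [h3]
      calc (w - n).choose (n - t - 1) * (w - 2*n)
          ≤ (w - n).choose (n - t - 1) * ((w - n) - (n - t - 1)) := by
            apply Nat.mul_le_mul_left; omega
        _ = (w - n).choose (n - t) * (n - t) := h1.symm
        _ ≤ (w - n).choose (n - t) * n := by apply Nat.mul_le_mul_left; omega
    calc (w - n).choose (n - (t+1)) * (w - 2*n)^(t+1)
        = ((w - n).choose (n - (t+1)) * (w - 2*n)) * (w - 2*n)^t := by ring
      _ ≤ ((w - n).choose (n - t) * n) * (w - 2*n)^t := Nat.mul_le_mul_right _ key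
      _ = ((w - n).choose (n - t) * (w - 2*n)^t) * n := by ring
      _ ≤ ((w - n).choose n * n^t) * n := Nat.mul_le_mul_right _ (ih ht')
      _ = (w - n).choose n * n^(t+1) := by ring

/-- Combinatorial bound in i.i.d. position-based decoding. -/
theorem iid_combinatorial_bound (n w : ℕ) (h : 2 * n < w) (F : ℝ) (hF : 0 ≤ F) :
    (1 / (w.choose n : ℝ)) * ∑ t ∈ Finset.range (n + 1),
        (n.choose t : ℝ) * ((w - n).choose (n - t) : ℝ) * (2:ℝ) ^ (F * t)
      ≤ (1 + (2:ℝ) ^ F * n / ((w : ℝ) - 2 * n)) ^ n := by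
  have hw : (0:ℝ) < (w:ℝ) - 2*n := by
    have : (2*n : ℝ) < (w : ℝ) := by exact_mod_cast h
    linarith
  have hC : (0:ℝ) < (w.choose n : ℝ) := by
    exact_mod_cast Nat.choose_pos (by omega : n ≤ w)
  have hrhs : (1 + (2:ℝ) ^ F * n / ((w : ℝ) - 2 * n)) ^ n =
      ∑ t ∈ Finset.range (n+1),
        ((2:ℝ) ^ F * n / ((w : ℝ) - 2 * n))^t * (n.choose t : ℝ) := by
    rw [add_comm, add_pow]; simp
  rw [Finset.mul_sum, hrhs]
  apply Finset.sum_le_sum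
  intro t htmem
  have ht : t ≤ n := by simpa [Nat.lt_succ_iff] using htmem
  have hpow : (0:ℝ) < ((w:ℝ) - 2*n)^t := pow_pos hw t
  have key : ((w - n).choose (n - t) : ℝ) / (w.choose n : ℝ)
      ≤ ((n:ℝ) / ((w:ℝ) - 2*n))^t := by
    rw [div_pow, div_le_div_iff₀ hC hpow]
    have hnat : (w - n).choose (n - t) * (w - 2*n)^t ≤ w.choose n * n^t :=
      le_trans (aux_choose_bound n w h t ht)
        (Nat.mul_le_mul_right _ (Nat.choose_le_choose n (Nat.sub_le w n)))
    have := (Nat.cast_le (α := ℝ)).2 hnat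
    push_cast [Nat.cast_sub (by omega : 2*n ≤ w)] at this
    calc ((w - n).choose (n - t) : ℝ) * ((w:ℝ) - 2*n)^t
        ≤ (w.choose n : ℝ) * (n:ℝ)^t := this
      _ = (n:ℝ)^t * (w.choose n : ℝ) := by ring
  have h2 : (2:ℝ) ^ (F * (t:ℝ)) = ((2:ℝ)^F)^t := by
    rw [Real.rpow_mul (by norm_num), Real.rpow_natCast]
  have hx : ((2:ℝ) ^ F * n / ((w : ℝ) - 2 * n))^t
      = ((2:ℝ)^F)^t * ((n:ℝ) / ((w:ℝ) - 2*n))^t := by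
    rw [mul_div_assoc, mul_pow]
  have h2F : (0:ℝ) ≤ ((2:ℝ)^F)^t := by positivity
  calc 1 / (w.choose n : ℝ) * ((n.choose t : ℝ) * ((w - n).choose (n - t) : ℝ) * (2:ℝ) ^ (F * t))
      = (n.choose t : ℝ) * ((2:ℝ)^F)^t * (((w - n).choose (n - t) : ℝ) / (w.choose n : ℝ)) := by
        rw [h2]; ring
    _ ≤ (n.choose t : ℝ) * ((2:ℝ)^F)^t * ((n:ℝ) / ((w:ℝ) - 2*n))^t := by
        apply mul_le_mul_of_nonneg_left key (by positivity)
    _ = ((2:ℝ) ^ F * n / ((w : ℝ) - 2 * n))^t * (n.choose t : ℝ) := by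
        rw [hx]; ring
end

section
/- Support-restricted positive part: let ρ' be a positive semidefinite operator supported in the range of an orthogonal projector Π that commutes with a positive semidefinite operator σ, where σ's eigenvectors include the range of Π. Then for any R, the projector onto the positive part {ρ' − 2^R σ}₊ equals the projector onto the positive part {ρ' − 2^R ΠσΠ}₊. -/
open Matrix Kronecker
open scoped ComplexOrder Classical

variable {n : Type*} [Fintype n] [DecidableEq n]

/-- The orthogonal projector onto the span of eigenvectors of a Hermitian matrix with
positive eigenvalues (junk value `0` for non-Hermitian input). -/
noncomputable def posProj (O : Matrix n n ℂ) : Matrix n n ℂ :=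
  if h : O.IsHermitian then h.cfc (fun x => if 0 < x then 1 else 0) else 0

private lemma pow_add_eq_of_mul_eq_zero {M : Type*} [Ring M] {x y : M}
    (hxy : x * y = 0) (hyx : y * x = 0) : ∀ k : ℕ, (x + y) ^ (k + 1) = x ^ (k + 1) + y ^ (k + 1) := by
  intro k
  induction k with
  | zero => simp
  | succ k ih =>
    have hx : x ^ (k + 1) * y = 0 := by
      rw [pow_succ, mul_assoc, hxy, mul_zero]
    have hy : y ^ (k + 1) * x = 0 := by
      rw [pow_succ, mul_assoc, hyx, mul_zero]
    rw [pow_succ, ih, add_mul, mul_add, mul_add, hx, hy, add_zero, zero_add,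
      ← pow_succ, ← pow_succ]

private lemma aeval_add_of_mul_eq_zero {M : Type*} [Ring M] [Algebra ℝ M] {x y : M}
    (hxy : x * y = 0) (hyx : y * x = 0) (p : Polynomial ℝ) (hp : p.coeff 0 = 0) :
    Polynomial.aeval (x + y) p = Polynomial.aeval x p + Polynomial.aeval y p := by
  rw [Polynomial.aeval_eq_sum_range (x + y), Polynomial.aeval_eq_sum_range x,
    Polynomial.aeval_eq_sum_range y, ← Finset.sum_add_distrib]
  refine Finset.sum_congr rfl fun i _ => ?_
  match i with
  | 0 => simp [hp]
  | (k + 1) => rw [pow_add_eq_of_mul_eq_zero hxy hyx k, smul_add]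

private lemma posSemidef_real_smul {M : Matrix n n ℂ} (hM : M.PosSemidef) {c : ℝ}
    (hc : 0 ≤ c) : (c • M).PosSemidef := by
  refine ⟨?_, fun x => ?_⟩
  · have := hM.1
    unfold Matrix.IsHermitian at *
    rw [conjTranspose_smul, this, star_trivial]
  · exact (hM.smul hc).2 x

/-- Support-restricted positive part: if `ρ'` is supported in the range of a projector `Pr`
commuting with `σ`, the positive-part projectors of `ρ' - 2^R σ` and `ρ' - 2^R PrσPr` agree. -/
theorem posProj_support_restrict (ρ' σ Pr : Matrix n n ℂ) (R : ℝ)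
    (hρ' : ρ'.PosSemidef) (hσ : σ.PosSemidef)
    (hPrH : Pr.IsHermitian) (hPr2 : Pr * Pr = Pr)
    (hcomm : Pr * σ = σ * Pr)
    (hsupp : Pr * ρ' * Pr = ρ') :
    posProj (ρ' - ((2:ℝ) ^ R) • σ) = posProj (ρ' - ((2:ℝ) ^ R) • (Pr * σ * Pr)) := by
  classical
  set c : ℝ := (2:ℝ) ^ R with hcdef
  have hc : 0 ≤ c := le_of_lt (Real.rpow_pos_of_pos two_pos R)
  set f : ℝ → ℝ := fun x => if 0 < x then 1 else 0 with hfdef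
  -- basic matrix identities
  have hρP : ρ' * Pr = ρ' := by
    conv_lhs => rw [← hsupp]
    rw [mul_assoc, mul_assoc, hPr2, ← mul_assoc, hsupp]
  have hPρ : Pr * ρ' = ρ' := by
    conv_lhs => rw [← hsupp]
    rw [← mul_assoc, ← mul_assoc, hPr2, hsupp]
  have hPσP : Pr * σ * Pr = σ * Pr := by
    rw [hcomm, mul_assoc, hPr2]
  -- the three matrices
  set A : Matrix n n ℂ := ρ' - c • σ with hAdef
  set A' : Matrix n n ℂ := ρ' - c • (Pr * σ * Pr) with hA'def
  set B : Matrix n n ℂ := c • (Pr * σ * Pr) - c • σ with hBdef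
  have hAB : A = A' + B := by rw [hAdef, hA'def, hBdef]; abel
  -- B = -(c • ((1 - Pr) * σ * (1 - Pr)))
  have e1 : σ * Pr * Pr = σ * Pr := by rw [mul_assoc, hPr2]
  have hQσQ : (1 - Pr) * σ * (1 - Pr) = σ - σ * Pr := by
    have h1 : (1 - Pr) * σ = σ - σ * Pr := by rw [sub_mul, one_mul, hcomm]
    rw [h1, sub_mul, mul_sub, mul_sub, mul_one, mul_one, e1]
    abel
  have hnegB : -B = c • ((1 - Pr) * σ * (1 - Pr)) := by
    rw [hQσQ, hBdef, hPσP, smul_sub]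
    abel
  -- Hermitian facts
  have hσH : σ.IsHermitian := hσ.1
  have hPσPH : (Pr * σ * Pr).IsHermitian := by
    have : (Pr * σ * Pr)ᴴ = Pr * σ * Pr := by
      rw [conjTranspose_mul, conjTranspose_mul, hσH.eq, hPrH.eq, mul_assoc]
    exact this
  have hcσ : (c • σ).IsHermitian := by
    unfold Matrix.IsHermitian
    rw [conjTranspose_smul, hσH.eq, star_trivial]
  have hcPσP : (c • (Pr * σ * Pr)).IsHermitian := by
    unfold Matrix.IsHermitian
    rw [conjTranspose_smul, hPσPH.eq, star_trivial]
  have hAH : A.IsHermitian := hρ'.1.sub hcσ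
  have hA'H : A'.IsHermitian := hρ'.1.sub hcPσP
  have hBH : B.IsHermitian := hcPσP.sub hcσ
  have hASA : IsSelfAdjoint A := hAH
  have hA'SA : IsSelfAdjoint A' := hA'H
  have hBSA : IsSelfAdjoint B := hBH
  -- A' * B = 0 and B * A' = 0
  have hA'P : A' * Pr = A' := by
    rw [hA'def, hPσP, sub_mul, hρP, smul_mul_assoc, e1]
  have hA'Q : A' * (1 - Pr) = 0 := by rw [mul_sub, mul_one, hA'P, sub_self]
  have hPA' : Pr * A' = A' := by
    rw [hA'def, hPσP, mul_sub, hPρ, mul_smul_comm, ← mul_assoc, hcomm, e1]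
  have hQA' : (1 - Pr) * A' = 0 := by rw [sub_mul, one_mul, hPA', sub_self]
  have hB' : B = -(c • ((1 - Pr) * σ * (1 - Pr))) := by rw [← hnegB]; abel
  have hA'B : A' * B = 0 := by
    rw [hB', mul_neg, mul_smul_comm, ← mul_assoc, ← mul_assoc, hA'Q, zero_mul, zero_mul,
      smul_zero, neg_zero]
  have hBA' : B * A' = 0 := by
    rw [hB', neg_mul, smul_mul_assoc, mul_assoc, hQA', mul_zero, smul_zero, neg_zero]
  -- -B is PSD, so spectrum of B is nonpositive
  have hnegBPSD : (-B).PosSemidef := by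
    rw [hnegB]
    refine posSemidef_real_smul ?_ hc
    have := hσ.mul_mul_conjTranspose_same (1 - Pr)
    have hQH : (1 - Pr)ᴴ = 1 - Pr := by
      rw [conjTranspose_sub, conjTranspose_one, hPrH.eq]
    rwa [hQH] at this
  have hspecB : ∀ x ∈ spectrum ℝ B, x ≤ 0 := by
    intro x hx
    have h1 : -x ∈ spectrum ℝ (-B) := by
      rw [← spectrum.neg_eq]
      exact Set.neg_mem_neg.mpr hx
    rw [Matrix.IsHermitian.spectrum_real_eq_range_eigenvalues hnegBPSD.1] at h1
    obtain ⟨i, hi⟩ := h1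
    have h2 := hnegBPSD.eigenvalues_nonneg i
    rw [hi] at h2
    linarith
  -- interpolation polynomial
  have hSA : (spectrum ℝ A).Finite := Matrix.finite_real_spectrum
  have hSA' : (spectrum ℝ A').Finite := Matrix.finite_real_spectrum
  have hSB : (spectrum ℝ B).Finite := Matrix.finite_real_spectrum
  set S : Finset ℝ := insert 0 (hSA.toFinset ∪ hSA'.toFinset ∪ hSB.toFinset) with hSdef
  set p : Polynomial ℝ := Lagrange.interpolate S id f with hpdef
  have hpeval : ∀ x ∈ S, p.eval x = f x := fun x hx =>
    Lagrange.eval_interpolate_at_node f (Set.injOn_id _) hx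
  have hp0 : p.coeff 0 = 0 := by
    rw [Polynomial.coeff_zero_eq_eval_zero, hpeval 0 (Finset.mem_insert_self 0 _)]
    simp [hfdef]
  have hmemA : ∀ x ∈ spectrum ℝ A, x ∈ S := fun x hx => by
    simp only [hSdef, Finset.mem_insert, Finset.mem_union, Set.Finite.mem_toFinset]
    tauto
  have hmemA' : ∀ x ∈ spectrum ℝ A', x ∈ S := fun x hx => by
    simp only [hSdef, Finset.mem_insert, Finset.mem_union, Set.Finite.mem_toFinset]
    tauto
  have hmemB : ∀ x ∈ spectrum ℝ B, x ∈ S := fun x hx => by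
    simp only [hSdef, Finset.mem_insert, Finset.mem_union, Set.Finite.mem_toFinset]
    tauto
  -- cfc computations
  have hcfcA : cfc f A = Polynomial.aeval A p := by
    rw [← cfc_polynomial p A hASA]
    exact cfc_congr fun x hx => (hpeval x (hmemA x hx)).symm
  have hcfcA' : cfc f A' = Polynomial.aeval A' p := by
    rw [← cfc_polynomial p A' hA'SA]
    exact cfc_congr fun x hx => (hpeval x (hmemA' x hx)).symm
  have hcfcB : Polynomial.aeval B p = 0 := by
    rw [← cfc_polynomial p B hBSA]
    have hEq : (spectrum ℝ B).EqOn p.eval (0 : ℝ → ℝ) := fun x hx => by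
      show p.eval x = 0
      rw [hpeval x (hmemB x hx)]
      simp [hfdef, not_lt.mpr (hspecB x hx)]
    rw [cfc_congr hEq, cfc_zero]
  have key : cfc f A = cfc f A' := by
    rw [hcfcA, hcfcA', hAB, aeval_add_of_mul_eq_zero hA'B hBA' p hp0, hcfcB, add_zero]
  -- conclude
  have e1 : posProj A = cfc f A := by
    rw [posProj, dif_pos hAH, ← Matrix.IsHermitian.cfc_eq]
  have e2 : posProj A' = cfc f A' := by
    rw [posProj, dif_pos hA'H, ← Matrix.IsHermitian.cfc_eq]
  calc posProj A = cfc f A := e1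
    _ = cfc f A' := key
    _ = posProj A' := e2.symm
end

section
/- Marginal bound after sandwiching: let ρ_{AB} be a bipartite density matrix, Π_A and Π_B spectral projectors of ρ_A and ρ_B respectively with Tr((Π_A⊗Π_B)ρ_{AB}) ≥ 1 − c > 0, and define ρ'_{AB} = (Π_A⊗Π_B)ρ_{AB}(Π_A⊗Π_B)/Tr((Π_A⊗Π_B)ρ_{AB}). Then ρ'_B ≤ (1/(1−c))·ρ_B in the Loewner order (and symmetrically ρ'_A ≤ (1/(1−c))·ρ_A). -/
open Matrix Kronecker
open scoped ComplexOrder Classical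

variable {n : Type*} [Fintype n] [DecidableEq n]

/-- Partial trace over the second tensor factor. -/
noncomputable def ptraceSnd {P Q : Type*} [Fintype P] [Fintype Q]
    (M : Matrix (P × Q) (P × Q) ℂ) : Matrix P P ℂ :=
  fun i j => ∑ k, M (i, k) (j, k)

/-- Partial trace over the first tensor factor. -/
noncomputable def ptraceFst {P Q : Type*} [Fintype P] [Fintype Q]
    (M : Matrix (P × Q) (P × Q) ℂ) : Matrix Q Q ℂ :=
  fun i j => ∑ k, M (k, i) (k, j)

section Aux

set_option linter.unusedSectionVars false

variable {P Q : Type*} [Fintype P] [Fintype Q] [DecidableEq P] [DecidableEq Q]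

lemma ptraceSnd_posSemidef {M : Matrix (P × Q) (P × Q) ℂ} (hM : M.PosSemidef) :
    (ptraceSnd M).PosSemidef := by
  refine Matrix.PosSemidef.of_dotProduct_mulVec_nonneg ?_ ?_
  · apply Matrix.ext; intro i j
    simp only [ptraceSnd, conjTranspose_apply, star_sum]
    exact Finset.sum_congr rfl fun k _ => hM.1.apply (i,k) (j,k)
  · intro x
    set y : Q → (P × Q) → ℂ := fun k p => if p.2 = k then x p.1 else 0 with hy
    have hk : ∀ k, star (y k) ⬝ᵥ M *ᵥ (y k)
        = ∑ a, ∑ a', star (x a) * (M (a,k) (a',k) * x a') := by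
      intro k
      simp [dotProduct, mulVec, Fintype.sum_prod_type, apply_ite, mul_ite, ite_mul,
        mul_zero, zero_mul, Finset.mul_sum, hy]
    have key : star x ⬝ᵥ (ptraceSnd M) *ᵥ x = ∑ k, star (y k) ⬝ᵥ M *ᵥ (y k) :=
      calc star x ⬝ᵥ (ptraceSnd M) *ᵥ x
          = ∑ a, ∑ a', ∑ k, star (x a) * (M (a,k) (a',k) * x a') := by
            simp [dotProduct, mulVec, ptraceSnd, Finset.mul_sum, Finset.sum_mul]
        _ = ∑ a, ∑ k, ∑ a', star (x a) * (M (a,k) (a',k) * x a') :=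
            Finset.sum_congr rfl fun a _ => Finset.sum_comm
        _ = ∑ k, ∑ a, ∑ a', star (x a) * (M (a,k) (a',k) * x a') := Finset.sum_comm
        _ = ∑ k, star (y k) ⬝ᵥ M *ᵥ (y k) := by simp [hk]
    rw [key]
    exact Finset.sum_nonneg fun k _ => hM.dotProduct_mulVec_nonneg _

lemma ptraceFst_posSemidef {M : Matrix (P × Q) (P × Q) ℂ} (hM : M.PosSemidef) :
    (ptraceFst M).PosSemidef := by
  refine Matrix.PosSemidef.of_dotProduct_mulVec_nonneg ?_ ?_
  · apply Matrix.ext; intro i j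
    simp only [ptraceFst, conjTranspose_apply, star_sum]
    exact Finset.sum_congr rfl fun k _ => hM.1.apply (k,i) (k,j)
  · intro x
    set y : P → (P × Q) → ℂ := fun k p => if p.1 = k then x p.2 else 0 with hy
    have hk : ∀ k, star (y k) ⬝ᵥ M *ᵥ (y k)
        = ∑ a, ∑ a', star (x a) * (M (k,a) (k,a') * x a') := by
      intro k
      simp [dotProduct, mulVec, Fintype.sum_prod_type, apply_ite, mul_ite, ite_mul,
        mul_zero, zero_mul, Finset.mul_sum, hy]
    have key : star x ⬝ᵥ (ptraceFst M) *ᵥ x = ∑ k, star (y k) ⬝ᵥ M *ᵥ (y k) :=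
      calc star x ⬝ᵥ (ptraceFst M) *ᵥ x
          = ∑ a, ∑ a', ∑ k, star (x a) * (M (k,a) (k,a') * x a') := by
            simp [dotProduct, mulVec, ptraceFst, Finset.mul_sum, Finset.sum_mul]
        _ = ∑ a, ∑ k, ∑ a', star (x a) * (M (k,a) (k,a') * x a') :=
            Finset.sum_congr rfl fun a _ => Finset.sum_comm
        _ = ∑ k, ∑ a, ∑ a', star (x a) * (M (k,a) (k,a') * x a') := Finset.sum_comm
        _ = ∑ k, star (y k) ⬝ᵥ M *ᵥ (y k) := by simp [hk]
    rw [key]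
    exact Finset.sum_nonneg fun k _ => hM.dotProduct_mulVec_nonneg _

lemma ptraceSnd_kronOne_mul (Pm : Matrix P P ℂ) (N : Matrix (P × Q) (P × Q) ℂ) :
    ptraceSnd ((Pm ⊗ₖ (1 : Matrix Q Q ℂ)) * N) = Pm * ptraceSnd N := by
  ext i j
  simp only [ptraceSnd, mul_apply, kroneckerMap_apply, one_apply, Fintype.sum_prod_type,
    mul_ite, mul_zero, mul_one, ite_mul, zero_mul, Finset.sum_ite_eq, Finset.sum_ite_eq',
    Finset.sum_ite_irrel, Finset.sum_const_zero, Finset.mem_univ, if_true, Finset.mul_sum]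
  exact Finset.sum_comm

lemma ptraceSnd_mul_kronOne (Pm : Matrix P P ℂ) (N : Matrix (P × Q) (P × Q) ℂ) :
    ptraceSnd (N * (Pm ⊗ₖ (1 : Matrix Q Q ℂ))) = ptraceSnd N * Pm := by
  ext i j
  simp only [ptraceSnd, mul_apply, kroneckerMap_apply, one_apply, Fintype.sum_prod_type,
    mul_ite, mul_zero, mul_one, ite_mul, zero_mul, Finset.sum_ite_eq, Finset.sum_ite_eq',
    Finset.sum_ite_irrel, Finset.sum_const_zero, Finset.mem_univ, if_true, Finset.sum_mul]
  exact Finset.sum_comm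

lemma ptraceSnd_oneKron_comm (Qm : Matrix Q Q ℂ) (N : Matrix (P × Q) (P × Q) ℂ) :
    ptraceSnd (((1 : Matrix P P ℂ) ⊗ₖ Qm) * N) = ptraceSnd (N * ((1 : Matrix P P ℂ) ⊗ₖ Qm)) := by
  ext i j
  simp only [ptraceSnd, mul_apply, kroneckerMap_apply, one_apply, Fintype.sum_prod_type,
    mul_ite, mul_zero, mul_one, one_mul, ite_mul, zero_mul, Finset.sum_ite_eq, Finset.sum_ite_eq',
    Finset.sum_ite_irrel, Finset.sum_const_zero, Finset.mem_univ, if_true]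
  rw [Finset.sum_comm]
  exact Finset.sum_congr rfl fun k _ => Finset.sum_congr rfl fun b _ => mul_comm _ _

lemma ptraceFst_oneKron_mul (Qm : Matrix Q Q ℂ) (N : Matrix (P × Q) (P × Q) ℂ) :
    ptraceFst (((1 : Matrix P P ℂ) ⊗ₖ Qm) * N) = Qm * ptraceFst N := by
  ext i j
  simp only [ptraceFst, mul_apply, kroneckerMap_apply, one_apply, Fintype.sum_prod_type,
    mul_ite, mul_zero, mul_one, one_mul, ite_mul, zero_mul, Finset.sum_ite_eq, Finset.sum_ite_eq',
    Finset.sum_ite_irrel, Finset.sum_const_zero, Finset.mem_univ, if_true, Finset.mul_sum]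
  exact Finset.sum_comm

lemma ptraceFst_mul_oneKron (Qm : Matrix Q Q ℂ) (N : Matrix (P × Q) (P × Q) ℂ) :
    ptraceFst (N * ((1 : Matrix P P ℂ) ⊗ₖ Qm)) = ptraceFst N * Qm := by
  ext i j
  simp only [ptraceFst, mul_apply, kroneckerMap_apply, one_apply, Fintype.sum_prod_type,
    mul_ite, mul_zero, mul_one, one_mul, ite_mul, zero_mul, Finset.sum_ite_eq, Finset.sum_ite_eq',
    Finset.sum_ite_irrel, Finset.sum_const_zero, Finset.mem_univ, if_true, Finset.sum_mul]
  exact Finset.sum_comm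

lemma ptraceFst_kronOne_comm (Pm : Matrix P P ℂ) (N : Matrix (P × Q) (P × Q) ℂ) :
    ptraceFst ((Pm ⊗ₖ (1 : Matrix Q Q ℂ)) * N) = ptraceFst (N * (Pm ⊗ₖ (1 : Matrix Q Q ℂ))) := by
  ext i j
  simp only [ptraceFst, mul_apply, kroneckerMap_apply, one_apply, Fintype.sum_prod_type,
    mul_ite, mul_zero, mul_one, one_mul, ite_mul, zero_mul, Finset.sum_ite_eq, Finset.sum_ite_eq',
    Finset.sum_ite_irrel, Finset.sum_const_zero, Finset.mem_univ, if_true]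
  rw [Finset.sum_comm]
  exact Finset.sum_congr rfl fun k _ => Finset.sum_congr rfl fun b _ => mul_comm _ _

lemma ptraceSnd_add (M N : Matrix (P × Q) (P × Q) ℂ) :
    ptraceSnd (M + N) = ptraceSnd M + ptraceSnd N := by
  ext i j; simp [ptraceSnd, Finset.sum_add_distrib]

lemma ptraceFst_add (M N : Matrix (P × Q) (P × Q) ℂ) :
    ptraceFst (M + N) = ptraceFst M + ptraceFst N := by
  ext i j; simp [ptraceFst, Finset.sum_add_distrib]

lemma ptraceSnd_smul (r : ℝ) (M : Matrix (P × Q) (P × Q) ℂ) :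
    ptraceSnd (r • M) = r • ptraceSnd M := by
  ext i j; simp [ptraceSnd, Finset.smul_sum]

lemma ptraceFst_smul (r : ℝ) (M : Matrix (P × Q) (P × Q) ℂ) :
    ptraceFst (r • M) = r • ptraceFst M := by
  ext i j; simp [ptraceFst, Finset.smul_sum]

lemma kron_conjTranspose (Pm : Matrix P P ℂ) (Qm : Matrix Q Q ℂ) :
    (Pm ⊗ₖ Qm)ᴴ = Pmᴴ ⊗ₖ Qmᴴ := by
  ext ⟨a, b⟩ ⟨c, d⟩
  simp [conjTranspose_apply, kroneckerMap_apply, mul_comm]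

lemma posSemidef_smul_real {M : Matrix P P ℂ} (hM : M.PosSemidef) {r : ℝ} (hr : 0 ≤ r) :
    (r • M).PosSemidef := by
  refine Matrix.PosSemidef.of_dotProduct_mulVec_nonneg ?_ ?_
  · have : (r • M)ᴴ = star r • Mᴴ := conjTranspose_smul r M
    rw [Matrix.IsHermitian, this, star_trivial, hM.1.eq]
  · intro x
    rw [smul_mulVec, dotProduct_smul]
    have h0 : (0 : ℂ) ≤ star x ⬝ᵥ M *ᵥ x := hM.dotProduct_mulVec_nonneg x
    have : r • (star x ⬝ᵥ M *ᵥ x) = (r : ℂ) * (star x ⬝ᵥ M *ᵥ x) := Complex.real_smul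
    rw [this]
    exact mul_nonneg (by exact_mod_cast hr) h0

end Aux

/-- Marginal bound after sandwiching by local spectral projectors. -/
theorem marginal_bound_sandwich {A B : Type*}
    [Fintype A] [DecidableEq A] [Fintype B] [DecidableEq B]
    (ρ : Matrix (A × B) (A × B) ℂ) (hρ : ρ.PosSemidef) (hρ1 : ρ.trace = 1)
    (PA : Matrix A A ℂ) (PB : Matrix B B ℂ)
    (hPAH : PA.IsHermitian) (hPA2 : PA * PA = PA)
    (hPAc : PA * ptraceSnd ρ = ptraceSnd ρ * PA)
    (hPBH : PB.IsHermitian) (hPB2 : PB * PB = PB)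
    (hPBc : PB * ptraceFst ρ = ptraceFst ρ * PB)
    (c : ℝ) (hc0 : 0 ≤ c) (hc1 : c < 1)
    (ht : 1 - c ≤ (((PA ⊗ₖ PB) * ρ).trace).re) :
    ((1 / (1 - c)) • ptraceSnd ρ -
        ptraceSnd (((((PA ⊗ₖ PB) * ρ).trace.re)⁻¹ : ℝ) •
          ((PA ⊗ₖ PB) * ρ * (PA ⊗ₖ PB)))).PosSemidef ∧
    ((1 / (1 - c)) • ptraceFst ρ -
        ptraceFst (((((PA ⊗ₖ PB) * ρ).trace.re)⁻¹ : ℝ) •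
          ((PA ⊗ₖ PB) * ρ * (PA ⊗ₖ PB)))).PosSemidef := by
  set t : ℝ := (((PA ⊗ₖ PB) * ρ).trace).re with htdef
  have hc : (0:ℝ) < 1 - c := by linarith
  have htpos : (0:ℝ) < t := lt_of_lt_of_le hc ht
  have hcoef : (0:ℝ) ≤ 1 / (1 - c) - t⁻¹ := by
    have h1 : t⁻¹ ≤ (1 - c)⁻¹ := by
      apply inv_anti₀ hc ht
    rw [one_div]; linarith
  set S : Matrix (A × B) (A × B) ℂ := PA ⊗ₖ PB with hSdef
  -- handy kronecker facts
  have hSfact : S = (PA ⊗ₖ (1 : Matrix B B ℂ)) * ((1 : Matrix A A ℂ) ⊗ₖ PB) := by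
    rw [← mul_kronecker_mul, mul_one, one_mul]
  have hSfact' : S = ((1 : Matrix A A ℂ) ⊗ₖ PB) * (PA ⊗ₖ (1 : Matrix B B ℂ)) := by
    rw [← mul_kronecker_mul, mul_one, one_mul]
  -- A side ---------------------------------------------------------------
  constructor
  · set ρA := ptraceSnd ρ with hρA
    have hρAps : ρA.PosSemidef := ptraceSnd_posSemidef hρ
    set X := ptraceSnd (ρ * ((1 : Matrix A A ℂ) ⊗ₖ PB)) with hX
    -- ptraceSnd (S ρ S) = PA * X * PA
    have hkey : ptraceSnd (S * ρ * S) = PA * X * PA := by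
      have e1 : S * ρ * S
          = (PA ⊗ₖ (1 : Matrix B B ℂ)) *
              (((1 : Matrix A A ℂ) ⊗ₖ PB) * ρ * ((1 : Matrix A A ℂ) ⊗ₖ PB)) *
              (PA ⊗ₖ (1 : Matrix B B ℂ)) := by
        nth_rewrite 1 [hSfact]
        nth_rewrite 1 [hSfact']
        noncomm_ring
      rw [e1, ptraceSnd_mul_kronOne, ptraceSnd_kronOne_mul]
      congr 2
      have e2 : ((1 : Matrix A A ℂ) ⊗ₖ PB) * ρ * ((1 : Matrix A A ℂ) ⊗ₖ PB)
          = ((1 : Matrix A A ℂ) ⊗ₖ PB) * (ρ * ((1 : Matrix A A ℂ) ⊗ₖ PB)) := mul_assoc _ _ _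
      rw [e2, ptraceSnd_oneKron_comm]
      have e3 : ρ * ((1 : Matrix A A ℂ) ⊗ₖ PB) * ((1 : Matrix A A ℂ) ⊗ₖ PB)
          = ρ * ((1 : Matrix A A ℂ) ⊗ₖ PB) := by
        rw [mul_assoc, ← mul_kronecker_mul, one_mul, hPB2]
      rw [e3]
    -- ρA - X is PSD
    have hAX : (ρA - X).PosSemidef := by
      set R : Matrix B B ℂ := 1 - PB with hR
      have hR2 : R * R = R := by
        simp only [hR, mul_sub, sub_mul, one_mul, mul_one, hPB2]
        abel
      have hRH : Rᴴ = R := by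
        simp [hR, conjTranspose_sub, hPBH.eq]
      have hsplit : ρA - X = ptraceSnd (ρ * ((1 : Matrix A A ℂ) ⊗ₖ R)) := by
        have : ρ * ((1 : Matrix A A ℂ) ⊗ₖ PB) + ρ * ((1 : Matrix A A ℂ) ⊗ₖ R) = ρ := by
          rw [← mul_add, ← kronecker_add, hR, add_sub_cancel, one_kronecker_one, mul_one]
        have h2 := congrArg ptraceSnd this
        rw [ptraceSnd_add] at h2
        rw [hρA, hX, ← h2]
        abel
      have hconj : ptraceSnd (ρ * ((1 : Matrix A A ℂ) ⊗ₖ R))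
          = ptraceSnd (((1 : Matrix A A ℂ) ⊗ₖ R) * ρ * ((1 : Matrix A A ℂ) ⊗ₖ R)) := by
        have e2 : ((1 : Matrix A A ℂ) ⊗ₖ R) * ρ * ((1 : Matrix A A ℂ) ⊗ₖ R)
            = ((1 : Matrix A A ℂ) ⊗ₖ R) * (ρ * ((1 : Matrix A A ℂ) ⊗ₖ R)) := mul_assoc _ _ _
        rw [e2, ptraceSnd_oneKron_comm, mul_assoc, ← mul_kronecker_mul, one_mul, hR2]
      rw [hsplit, hconj]
      apply ptraceSnd_posSemidef
      have : ((1 : Matrix A A ℂ) ⊗ₖ R) * ρ * ((1 : Matrix A A ℂ) ⊗ₖ R)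
          = ((1 : Matrix A A ℂ) ⊗ₖ R)ᴴ * ρ * ((1 : Matrix A A ℂ) ⊗ₖ R) := by
        rw [kron_conjTranspose, conjTranspose_one, hRH]
      rw [this]
      exact hρ.conjTranspose_mul_mul_same _
    -- PA (ρA - X) PA is PSD
    have h3 : (PA * (ρA - X) * PA).PosSemidef := by
      have := hAX.conjTranspose_mul_mul_same PA
      rwa [hPAH.eq] at this
    -- ρA - PA ρA PA is PSD
    have h4 : (ρA - PA * ρA * PA).PosSemidef := by
      have e : ρA - PA * ρA * PA = (1 - PA) * ρA * (1 - PA) := by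
        have h7 : ρA * PA * PA = ρA * PA := by rw [mul_assoc, hPA2]
        simp only [sub_mul, mul_sub, one_mul, mul_one, hPAc, h7]
        abel
      rw [e]
      have hPAH' : (1 - PA)ᴴ = 1 - PA := by
        simp [conjTranspose_sub, hPAH.eq]
      have := hρAps.conjTranspose_mul_mul_same (1 - PA)
      rwa [hPAH'] at this
    -- combine
    have hfull : (ρA - ptraceSnd (S * ρ * S)).PosSemidef := by
      have e : ρA - ptraceSnd (S * ρ * S)
          = (ρA - PA * ρA * PA) + PA * (ρA - X) * PA := by
        rw [hkey]; noncomm_ring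
      rw [e]
      exact h4.add h3
    have hgoal : (1 / (1 - c)) • ρA - ptraceSnd ((t⁻¹ : ℝ) • (S * ρ * S))
        = (1 / (1 - c) - t⁻¹) • ρA + t⁻¹ • (ρA - ptraceSnd (S * ρ * S)) := by
      rw [ptraceSnd_smul]
      module
    rw [hgoal]
    exact (posSemidef_smul_real hρAps hcoef).add
      (posSemidef_smul_real hfull (le_of_lt (inv_pos.mpr htpos)))
  -- B side ---------------------------------------------------------------
  · set ρB := ptraceFst ρ with hρB
    have hρBps : ρB.PosSemidef := ptraceFst_posSemidef hρ
    set X := ptraceFst (ρ * (PA ⊗ₖ (1 : Matrix B B ℂ))) with hX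
    have hkey : ptraceFst (S * ρ * S) = PB * X * PB := by
      have e1 : S * ρ * S
          = ((1 : Matrix A A ℂ) ⊗ₖ PB) *
              ((PA ⊗ₖ (1 : Matrix B B ℂ)) * ρ * (PA ⊗ₖ (1 : Matrix B B ℂ))) *
              ((1 : Matrix A A ℂ) ⊗ₖ PB) := by
        nth_rewrite 1 [hSfact']
        nth_rewrite 1 [hSfact]
        noncomm_ring
      rw [e1, ptraceFst_mul_oneKron, ptraceFst_oneKron_mul]
      congr 2
      have e2 : (PA ⊗ₖ (1 : Matrix B B ℂ)) * ρ * (PA ⊗ₖ (1 : Matrix B B ℂ))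
          = (PA ⊗ₖ (1 : Matrix B B ℂ)) * (ρ * (PA ⊗ₖ (1 : Matrix B B ℂ))) := mul_assoc _ _ _
      rw [e2, ptraceFst_kronOne_comm]
      have e3 : ρ * (PA ⊗ₖ (1 : Matrix B B ℂ)) * (PA ⊗ₖ (1 : Matrix B B ℂ))
          = ρ * (PA ⊗ₖ (1 : Matrix B B ℂ)) := by
        rw [mul_assoc, ← mul_kronecker_mul, one_mul, hPA2]
      rw [e3]
    have hBX : (ρB - X).PosSemidef := by
      set R : Matrix A A ℂ := 1 - PA with hR
      have hR2 : R * R = R := by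
        simp only [hR, mul_sub, sub_mul, one_mul, mul_one, hPA2]
        abel
      have hRH : Rᴴ = R := by
        simp [hR, conjTranspose_sub, hPAH.eq]
      have hsplit : ρB - X = ptraceFst (ρ * (R ⊗ₖ (1 : Matrix B B ℂ))) := by
        have : ρ * (PA ⊗ₖ (1 : Matrix B B ℂ)) + ρ * (R ⊗ₖ (1 : Matrix B B ℂ)) = ρ := by
          rw [← mul_add, ← add_kronecker, hR, add_sub_cancel, one_kronecker_one, mul_one]
        have h2 := congrArg ptraceFst this
        rw [ptraceFst_add] at h2
        rw [hρB, hX, ← h2]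
        abel
      have hconj : ptraceFst (ρ * (R ⊗ₖ (1 : Matrix B B ℂ)))
          = ptraceFst ((R ⊗ₖ (1 : Matrix B B ℂ)) * ρ * (R ⊗ₖ (1 : Matrix B B ℂ))) := by
        have e2 : (R ⊗ₖ (1 : Matrix B B ℂ)) * ρ * (R ⊗ₖ (1 : Matrix B B ℂ))
            = (R ⊗ₖ (1 : Matrix B B ℂ)) * (ρ * (R ⊗ₖ (1 : Matrix B B ℂ))) := mul_assoc _ _ _
        rw [e2, ptraceFst_kronOne_comm, mul_assoc, ← mul_kronecker_mul, one_mul, hR2]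
      rw [hsplit, hconj]
      apply ptraceFst_posSemidef
      have : (R ⊗ₖ (1 : Matrix B B ℂ)) * ρ * (R ⊗ₖ (1 : Matrix B B ℂ))
          = (R ⊗ₖ (1 : Matrix B B ℂ))ᴴ * ρ * (R ⊗ₖ (1 : Matrix B B ℂ)) := by
        rw [kron_conjTranspose, conjTranspose_one, hRH]
      rw [this]
      exact hρ.conjTranspose_mul_mul_same _
    have h3 : (PB * (ρB - X) * PB).PosSemidef := by
      have := hBX.conjTranspose_mul_mul_same PB
      rwa [hPBH.eq] at this
    have h4 : (ρB - PB * ρB * PB).PosSemidef := by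
      have e : ρB - PB * ρB * PB = (1 - PB) * ρB * (1 - PB) := by
        have h7 : ρB * PB * PB = ρB * PB := by rw [mul_assoc, hPB2]
        simp only [sub_mul, mul_sub, one_mul, mul_one, hPBc, h7]
        abel
      rw [e]
      have hPBH' : (1 - PB)ᴴ = 1 - PB := by
        simp [conjTranspose_sub, hPBH.eq]
      have := hρBps.conjTranspose_mul_mul_same (1 - PB)
      rwa [hPBH'] at this
    have hfull : (ρB - ptraceFst (S * ρ * S)).PosSemidef := by
      have e : ρB - ptraceFst (S * ρ * S)
          = (ρB - PB * ρB * PB) + PB * (ρB - X) * PB := by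
        rw [hkey]; noncomm_ring
      rw [e]
      exact h4.add h3
    have hgoal : (1 / (1 - c)) • ρB - ptraceFst ((t⁻¹ : ℝ) • (S * ρ * S))
        = (1 / (1 - c) - t⁻¹) • ρB + t⁻¹ • (ρB - ptraceFst (S * ρ * S)) := by
      rw [ptraceFst_smul]
      module
    rw [hgoal]
    exact (posSemidef_smul_real hρBps hcoef).add
      (posSemidef_smul_real hfull (le_of_lt (inv_pos.mpr htpos)))
end
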